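/- arXiv:1808.06705 — 5 statements merged into one kernel-verified Lean document; each statement's English description precedes it below -/
import Mathlib

section
/- In the label propagation algorithm, if a directed edge (v,u) exists at some step, then vertices v and u remain connected (in the undirected sense, via existing edges) at every subsequent step. -/
/-- One step of edge replacement: label propagation `(v,u) ↦ (u, L v)` when `u ≠ L v`,
symmetrization `(v,u) ↦ (u,v)` when `u = L v`. -/
def stepEdges (L : ℕ → ℕ) (E : Multiset (ℕ × ℕ)) : Multiset (ℕ × ℕ) :=
  E.map (fun e => if e.2 = L e.1 then (e.2, e.1) else (e.2, L e.1))

/-- One step of label update: `L' u = min (L u) (min of L v over edges (v,u) with u ≠ L v)`. -/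
def stepLabels (L : ℕ → ℕ) (E : Multiset (ℕ × ℕ)) : ℕ → ℕ :=
  fun u =>
    ((E.filter (fun e => e.2 = u ∧ e.2 ≠ L e.1)).map (fun e => L e.1)).fold min (L u)

/-- One full step of the label propagation algorithm. -/
def lpStep (s : Multiset (ℕ × ℕ) × (ℕ → ℕ)) : Multiset (ℕ × ℕ) × (ℕ → ℕ) :=
  (stepEdges s.2 s.1, stepLabels s.2 s.1)

/-- Initial labels: the minimum of the closed neighborhood of `v`. -/
def initLabels (E₀ : Finset (ℕ × ℕ)) (v : ℕ) : ℕ :=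
  (insert v ((E₀.filter (fun e => e.1 = v)).image Prod.snd)).min' (Finset.insert_nonempty _ _)

/-- The state (edge multiset, label array) after `k` steps of the algorithm on
initial (directed) edge set `E₀`. -/
def lpRun (E₀ : Finset (ℕ × ℕ)) (k : ℕ) : Multiset (ℕ × ℕ) × (ℕ → ℕ) :=
  lpStep^[k] (E₀.val, initLabels E₀)

/-- Undirected connectivity via the edges of a directed edge multiset. -/
def EdgeConn (E : Multiset (ℕ × ℕ)) (v u : ℕ) : Prop :=
  Relation.ReflTransGen (fun a b => (a, b) ∈ E ∨ (b, a) ∈ E) v u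

/-- `E₀` is symmetric (both orientations of each undirected edge are present). -/
def IsSym (E₀ : Finset (ℕ × ℕ)) : Prop := ∀ v u : ℕ, (v, u) ∈ E₀ → (u, v) ∈ E₀

/-- `E₀` has no loop edges. -/
def Loopless (E₀ : Finset (ℕ × ℕ)) : Prop := ∀ v : ℕ, (v, v) ∉ E₀

namespace LPaux

lemma fold_min_le_init (s : Multiset ℕ) (b : ℕ) : s.fold min b ≤ b := by
  induction s using Multiset.induction with
  | empty => simp
  | cons a s ih =>
    rw [Multiset.fold_cons_left]
    exact le_trans (min_le_right _ _) ih

lemma fold_min_le_mem {s : Multiset ℕ} {a : ℕ} (b : ℕ) (h : a ∈ s) : s.fold min b ≤ a := by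
  induction s using Multiset.induction with
  | empty => simp at h
  | cons c s ih =>
    rw [Multiset.fold_cons_left]
    rcases Multiset.mem_cons.1 h with h | h
    · subst h; exact min_le_left _ _
    · exact le_trans (min_le_right _ _) (ih h)

lemma fold_min_choice (s : Multiset ℕ) (b : ℕ) : s.fold min b = b ∨ s.fold min b ∈ s := by
  induction s using Multiset.induction with
  | empty => simp
  | cons a s ih =>
    rw [Multiset.fold_cons_left]
    rcases min_choice a (s.fold min b) with h | h
    · right; rw [h]; exact Multiset.mem_cons_self _ _
    · rw [h]
      rcases ih with h' | h'
      · left; exact h'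
      · right; exact Multiset.mem_cons_of_mem h'

lemma stepLabels_le (L : ℕ → ℕ) (E : Multiset (ℕ × ℕ)) (u : ℕ) :
    stepLabels L E u ≤ L u := fold_min_le_init _ _

lemma stepLabels_le_of_mem {L : ℕ → ℕ} {E : Multiset (ℕ × ℕ)} {u : ℕ} {e : ℕ × ℕ}
    (he : e ∈ E) (h2 : e.2 = u) (hne : e.2 ≠ L e.1) : stepLabels L E u ≤ L e.1 :=
  fold_min_le_mem _ (Multiset.mem_map_of_mem _ (Multiset.mem_filter.2 ⟨he, h2, hne⟩))

lemma stepLabels_cases (L : ℕ → ℕ) (E : Multiset (ℕ × ℕ)) (u : ℕ) :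
    stepLabels L E u = L u ∨
      ∃ e ∈ E, e.2 = u ∧ e.2 ≠ L e.1 ∧ stepLabels L E u = L e.1 := by
  rcases fold_min_choice ((E.filter (fun e => e.2 = u ∧ e.2 ≠ L e.1)).map (fun e => L e.1))
      (L u) with h | h
  · left; exact h
  · right
    rcases Multiset.mem_map.1 h with ⟨e, he, heq⟩
    rcases Multiset.mem_filter.1 he with ⟨heE, h2, hne⟩
    exact ⟨e, heE, h2, hne, heq.symm⟩

lemma mem_stepEdges_prop {L : ℕ → ℕ} {E : Multiset (ℕ × ℕ)} {e : ℕ × ℕ}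
    (he : e ∈ E) (h : e.2 = L e.1) : (e.2, e.1) ∈ stepEdges L E := by
  exact Multiset.mem_map.2 ⟨e, he, by simp only [if_pos h]⟩

lemma mem_stepEdges_imp {L : ℕ → ℕ} {E : Multiset (ℕ × ℕ)} {e : ℕ × ℕ}
    (he : e ∈ E) (h : e.2 ≠ L e.1) : (e.2, L e.1) ∈ stepEdges L E := by
  exact Multiset.mem_map.2 ⟨e, he, by simp only [if_neg h]⟩

lemma lpRun_zero (E₀ : Finset (ℕ × ℕ)) : lpRun E₀ 0 = (E₀.val, initLabels E₀) := rfl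

lemma lpRun_succ (E₀ : Finset (ℕ × ℕ)) (k : ℕ) :
    lpRun E₀ (k + 1) = lpStep (lpRun E₀ k) := by
  simp [lpRun, Function.iterate_succ_apply']

lemma label_le (E₀ : Finset (ℕ × ℕ)) : ∀ k x, (lpRun E₀ k).2 x ≤ x := by
  intro k
  induction k with
  | zero =>
    intro x
    exact Finset.min'_le _ x (Finset.mem_insert_self _ _)
  | succ k ih =>
    intro x
    rw [lpRun_succ]
    exact le_trans (stepLabels_le _ _ _) (ih x)

/-- Invariant: each vertex equals its label, or the edge to its label is present. -/
lemma label_edge (E₀ : Finset (ℕ × ℕ)) :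
    ∀ k x, (lpRun E₀ k).2 x = x ∨ (x, (lpRun E₀ k).2 x) ∈ (lpRun E₀ k).1 ∨
      ((lpRun E₀ k).2 x, x) ∈ (lpRun E₀ k).1 := by
  intro k
  induction k with
  | zero =>
    intro x
    have hm := Finset.min'_mem (insert x ((E₀.filter (fun e => e.1 = x)).image Prod.snd))
      (Finset.insert_nonempty _ _)
    rcases Finset.mem_insert.1 hm with h | h
    · left; exact h
    · right; left
      rcases Finset.mem_image.1 h with ⟨e, he, hsnd⟩
      rcases Finset.mem_filter.1 he with ⟨heE, hfst⟩
      have : e = (x, (lpRun E₀ 0).2 x) := by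
        apply Prod.ext
        · exact hfst
        · exact hsnd
      rw [← this]
      exact heE
  | succ k ih =>
    intro x
    rw [lpRun_succ]
    set L := (lpRun E₀ k).2 with hL
    set E := (lpRun E₀ k).1 with hE
    show stepLabels L E x = x ∨ (x, stepLabels L E x) ∈ stepEdges L E ∨
      (stepLabels L E x, x) ∈ stepEdges L E
    rcases stepLabels_cases L E x with hcase | ⟨e, heE, h2, hne, heq⟩
    · -- label unchanged
      rcases ih x with h0 | h0 | h0
      · left; rw [hcase, h0]
      · -- (x, L x) ∈ E ; it maps to (L x, x)
        right; right
        rw [hcase]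
        have := mem_stepEdges_prop (e := (x, L x)) h0 rfl
        exact this
      · -- (L x, x) ∈ E
        by_cases hxx : L x = x
        · left; rw [hcase, hxx]
        · by_cases hLL : x = L (L x)
          · exfalso
            have h1 : L (L x) ≤ L x := label_le E₀ k (L x)
            have h2' : L x ≤ x := label_le E₀ k x
            omega
          · -- edge (L x, x) maps to (x, L (L x))
            have hmem := mem_stepEdges_imp (e := (L x, x)) h0 hLL
            have hle : stepLabels L E x ≤ L (L x) :=
              stepLabels_le_of_mem (e := (L x, x)) h0 rfl hLL
            have hge : L x ≤ L (L x) := le_of_eq_of_le hcase.symm hle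
            have : L (L x) = L x := le_antisymm (label_le E₀ k (L x)) hge
            right; left
            rw [hcase, ← this]
            exact hmem
    · -- label updated along edge e = (e.1, x): new edge (x, L e.1) exists
      right; left
      rw [heq]
      have := mem_stepEdges_imp heE hne
      rwa [h2] at this

lemma edgeConn_symm {E : Multiset (ℕ × ℕ)} {a b : ℕ} (h : EdgeConn E a b) :
    EdgeConn E b a :=
  (@Relation.ReflTransGen.stdSymm _ _ ⟨fun _ _ h => Or.symm h⟩).symm _ _ h

/-- After one more step, each vertex is connected to its old label. -/
lemma conn_label (E₀ : Finset (ℕ × ℕ)) (k : ℕ) :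
    ∀ x, EdgeConn (lpRun E₀ (k + 1)).1 x ((lpRun E₀ k).2 x) := by
  set L := (lpRun E₀ k).2 with hL
  set E := (lpRun E₀ k).1 with hE
  have hE' : (lpRun E₀ (k + 1)).1 = stepEdges L E := by rw [lpRun_succ]; rfl
  have key : ∀ n, ∀ x, L x = n → EdgeConn (stepEdges L E) x (L x) := by
    intro n
    induction n using Nat.strong_induction_on with
    | _ n ihn =>
      intro x hx
      by_cases hxx : L x = x
      · rw [hxx]; exact Relation.ReflTransGen.refl
      · rcases label_edge E₀ k x with h0 | h0 | h0
        · exact absurd h0 hxx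
        · -- (x, L x) ∈ E maps to (L x, x)
          have hmem := mem_stepEdges_prop (e := (x, L x)) h0 rfl
          exact Relation.ReflTransGen.single (Or.inr hmem)
        · -- (L x, x) ∈ E
          by_cases hLL : x = L (L x)
          · -- maps to (x, L x)
            have hmem := mem_stepEdges_prop (e := (L x, x)) h0 hLL
            exact Relation.ReflTransGen.single (Or.inl hmem)
          · -- maps to (x, L (L x))
            have hmem := mem_stepEdges_imp (e := (L x, x)) h0 hLL
            have h1 : EdgeConn (stepEdges L E) x (L (L x)) :=
              Relation.ReflTransGen.single (Or.inl hmem)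
            by_cases hfix : L (L x) = L x
            · rwa [hfix] at h1
            · have hlt : L (L x) < L x :=
                lt_of_le_of_ne (label_le E₀ k (L x)) hfix
              have h2 : EdgeConn (stepEdges L E) (L x) (L (L x)) :=
                ihn (L (L x)) (by omega) (L x) rfl
              exact h1.trans (edgeConn_symm h2)
  intro x
  rw [hE']
  exact key (L x) x rfl

/-- One-step preservation of connectivity for a single edge. -/
lemma conn_step (E₀ : Finset (ℕ × ℕ)) (k : ℕ) {v u : ℕ}
    (h : (v, u) ∈ (lpRun E₀ k).1) : EdgeConn (lpRun E₀ (k + 1)).1 v u := by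
  set L := (lpRun E₀ k).2 with hL
  set E := (lpRun E₀ k).1 with hE
  have hE' : (lpRun E₀ (k + 1)).1 = stepEdges L E := by rw [lpRun_succ]; rfl
  by_cases hc : u = L v
  · have hmem := mem_stepEdges_prop (e := (v, u)) h hc
    rw [hE']
    exact Relation.ReflTransGen.single (Or.inr hmem)
  · have hmem := mem_stepEdges_imp (e := (v, u)) h hc
    have h1 : EdgeConn (lpRun E₀ (k + 1)).1 u (L v) := by
      rw [hE']; exact Relation.ReflTransGen.single (Or.inl hmem)
    have h2 : EdgeConn (lpRun E₀ (k + 1)).1 v (L v) := conn_label E₀ k v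
    exact h2.trans (edgeConn_symm h1)

/-- One-step preservation of connectivity. -/
lemma conn_mono (E₀ : Finset (ℕ × ℕ)) (k : ℕ) {a b : ℕ}
    (h : EdgeConn (lpRun E₀ k).1 a b) : EdgeConn (lpRun E₀ (k + 1)).1 a b := by
  induction h with
  | refl => exact Relation.ReflTransGen.refl
  | tail _ hbc ih =>
    refine ih.trans ?_
    rcases hbc with h' | h'
    · exact conn_step E₀ k h'
    · exact edgeConn_symm (conn_step E₀ k h')

end LPaux

/-- If a directed edge `(v,u)` exists at some step `k` of the label
propagation algorithm (run on a loopless symmetric initial edge set), then `v` and `u`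
remain connected, in the undirected sense via the current edges, at every subsequent step. -/
theorem edge_implies_connected_forever
    (E₀ : Finset (ℕ × ℕ)) (hsym : IsSym E₀) (hloop : Loopless E₀)
    (k : ℕ) (v u : ℕ) (h : (v, u) ∈ (lpRun E₀ k).1) :
    ∀ j : ℕ, k ≤ j → EdgeConn (lpRun E₀ j).1 v u := by
  intro j hj
  induction j, hj using Nat.le_induction with
  | base => exact Relation.ReflTransGen.single (Or.inl h)
  | succ n hn ih => exact LPaux.conn_mono E₀ n ih
end

section
/- The label propagation algorithm terminates with every vertex in a connected component assigned the minimum vertex label of that component, i.e., it correctly computes the connected components of G. -/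
namespace LPProof

/-! ### fold min lemmas -/

lemma fold_min_le_init (s : Multiset ℕ) (a : ℕ) : s.fold min a ≤ a := by
  induction s using Multiset.induction_on with
  | empty => simp
  | cons x s ih => rw [Multiset.fold_cons_left]; exact le_trans (min_le_right _ _) ih

lemma fold_min_le_mem {s : Multiset ℕ} {b : ℕ} (h : b ∈ s) (a : ℕ) : s.fold min a ≤ b := by
  induction s using Multiset.induction_on with
  | empty => simp at h
  | cons x s ih =>
      rw [Multiset.fold_cons_left]
      rcases Multiset.mem_cons.1 h with rfl | h
      · exact min_le_left _ _
      · exact le_trans (min_le_right _ _) (ih h)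

lemma fold_min_cases (s : Multiset ℕ) (a : ℕ) :
    s.fold min a = a ∨ ∃ b ∈ s, s.fold min a = b := by
  induction s using Multiset.induction_on with
  | empty => simp
  | cons x s ih =>
      rw [Multiset.fold_cons_left]
      rcases min_choice x (s.fold min a) with h | h
      · exact Or.inr ⟨x, Multiset.mem_cons_self _ _, h⟩
      · rcases ih with h' | ⟨b, hb, h'⟩
        · exact Or.inl (h.trans h')
        · exact Or.inr ⟨b, Multiset.mem_cons_of_mem hb, h.trans h'⟩

/-! ### stepLabels / stepEdges lemmas -/

lemma stepLabels_le (L : ℕ → ℕ) (E : Multiset (ℕ × ℕ)) (u : ℕ) :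
    stepLabels L E u ≤ L u := fold_min_le_init _ _

lemma stepLabels_le_edge {L : ℕ → ℕ} {E : Multiset (ℕ × ℕ)} {v u : ℕ}
    (h : (v, u) ∈ E) (hn : u ≠ L v) : stepLabels L E u ≤ L v := by
  apply fold_min_le_mem
  exact Multiset.mem_map.2 ⟨(v, u), Multiset.mem_filter.2 ⟨h, ⟨rfl, hn⟩⟩, rfl⟩

lemma stepLabels_cases (L : ℕ → ℕ) (E : Multiset (ℕ × ℕ)) (u : ℕ) :
    stepLabels L E u = L u ∨
      ∃ v, (v, u) ∈ E ∧ u ≠ L v ∧ stepLabels L E u = L v := by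
  rcases fold_min_cases ((E.filter (fun e => e.2 = u ∧ e.2 ≠ L e.1)).map (fun e => L e.1)) (L u)
    with h | ⟨b, hb, h⟩
  · exact Or.inl h
  · obtain ⟨e, he, rfl⟩ := Multiset.mem_map.1 hb
    obtain ⟨heE, h2, h3⟩ := Multiset.mem_filter.1 he
    refine Or.inr ⟨e.1, ?_, ?_, h⟩
    · rw [← h2]; exact heE
    · rwa [← h2]

lemma stepEdges_mem_sym {L : ℕ → ℕ} {E : Multiset (ℕ × ℕ)} {p q : ℕ}
    (h : (p, q) ∈ E) (hq : q = L p) : (q, p) ∈ stepEdges L E :=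
  Multiset.mem_map.2 ⟨(p, q), h, by simp [hq]⟩

lemma stepEdges_mem_prop {L : ℕ → ℕ} {E : Multiset (ℕ × ℕ)} {p q : ℕ}
    (h : (p, q) ∈ E) (hq : q ≠ L p) : (q, L p) ∈ stepEdges L E :=
  Multiset.mem_map.2 ⟨(p, q), h, by simp [hq]⟩

lemma stepEdges_inv {L : ℕ → ℕ} {E : Multiset (ℕ × ℕ)} {e' : ℕ × ℕ}
    (h : e' ∈ stepEdges L E) :
    ∃ p q, (p, q) ∈ E ∧ ((q = L p ∧ e' = (q, p)) ∨ (q ≠ L p ∧ e' = (q, L p))) := by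
  obtain ⟨e, he, hEq⟩ := Multiset.mem_map.1 h
  refine ⟨e.1, e.2, by rwa [Prod.mk.eta], ?_⟩
  by_cases hc : e.2 = L e.1
  · exact Or.inl ⟨hc, by rw [← hEq]; simp [hc]⟩
  · exact Or.inr ⟨hc, by rw [← hEq]; simp [hc]⟩

/-! ### initLabels lemmas -/

lemma initLabels_le (E₀ : Finset (ℕ × ℕ)) (v : ℕ) : initLabels E₀ v ≤ v :=
  Finset.min'_le _ _ (Finset.mem_insert_self _ _)

lemma initLabels_spec (E₀ : Finset (ℕ × ℕ)) (v : ℕ) :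
    initLabels E₀ v = v ∨ (v, initLabels E₀ v) ∈ E₀ := by
  have hmem := Finset.min'_mem (insert v ((E₀.filter (fun e => e.1 = v)).image Prod.snd))
    (Finset.insert_nonempty _ _)
  rcases Finset.mem_insert.1 hmem with h | h
  · exact Or.inl h
  · obtain ⟨e, he, hsnd⟩ := Finset.mem_image.1 h
    obtain ⟨heE, hfst⟩ := Finset.mem_filter.1 he
    right
    have h1 : initLabels E₀ v = e.2 := hsnd.symm
    rw [h1, ← hfst]
    exact heE

/-! ### the run -/

variable (E₀ : Finset (ℕ × ℕ))

def Ek (k : ℕ) : Multiset (ℕ × ℕ) := (lpRun E₀ k).1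
def Lk (k : ℕ) : ℕ → ℕ := (lpRun E₀ k).2

lemma Ek_zero : Ek E₀ 0 = E₀.val := rfl
lemma Lk_zero : Lk E₀ 0 = initLabels E₀ := rfl

lemma Ek_succ (k : ℕ) : Ek E₀ (k + 1) = stepEdges (Lk E₀ k) (Ek E₀ k) := by
  unfold Ek Lk lpRun
  rw [Function.iterate_succ_apply']
  rfl

lemma Lk_succ (k : ℕ) : Lk E₀ (k + 1) = stepLabels (Lk E₀ k) (Ek E₀ k) := by
  unfold Ek Lk lpRun
  rw [Function.iterate_succ_apply']
  rfl

lemma Lk_le_self (k v : ℕ) : Lk E₀ k v ≤ v := by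
  induction k with
  | zero => exact initLabels_le E₀ v
  | succ k ih => rw [Lk_succ]; exact le_trans (stepLabels_le _ _ _) ih

lemma Lk_succ_le (k v : ℕ) : Lk E₀ (k + 1) v ≤ Lk E₀ k v := by
  rw [Lk_succ]; exact stepLabels_le _ _ _

lemma Lk_anti (v : ℕ) : Antitone fun k => Lk E₀ k v :=
  antitone_nat_of_succ_le fun k => Lk_succ_le E₀ k v

/-! ### the key structural invariant S2' -/

lemma s2 (k v : ℕ) :
    Lk E₀ k v = v ∨ (v, Lk E₀ k v) ∈ Ek E₀ k ∨ (Lk E₀ k v, v) ∈ Ek E₀ k ∨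
      ∃ w, (w, v) ∈ Ek E₀ k ∧ Lk E₀ k w = Lk E₀ k v := by
  induction k with
  | zero =>
      rcases initLabels_spec E₀ v with h | h
      · exact Or.inl h
      · exact Or.inr (Or.inl h)
  | succ k ih =>
      rw [Lk_succ, Ek_succ]
      rcases stepLabels_cases (Lk E₀ k) (Ek E₀ k) v with hc | ⟨w, hw, hnw, hc⟩
      · -- label unchanged: stepLabels .. v = Lk k v
        by_cases hm : Lk E₀ k v = v
        · exact Or.inl (hc.trans hm)
        rcases ih with h0 | h1 | h2 | ⟨w, hw, hlw⟩
        · exact absurd h0 hm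
        · -- (v, m) ∈ E_k, m = L v : symmetrize
          right; right; left
          rw [hc]
          exact stepEdges_mem_sym h1 rfl
        · -- (m, v) ∈ E_k
          have hvm : v ≠ Lk E₀ k (Lk E₀ k v) := by
            intro hEq
            have h3 : Lk E₀ k (Lk E₀ k v) ≤ Lk E₀ k v := Lk_le_self E₀ k _
            have h4 : Lk E₀ k v ≤ v := Lk_le_self E₀ k v
            omega
          have hle : stepLabels (Lk E₀ k) (Ek E₀ k) v ≤ Lk E₀ k (Lk E₀ k v) :=
            stepLabels_le_edge h2 hvm
          have h5 : Lk E₀ k (Lk E₀ k v) ≤ Lk E₀ k v := Lk_le_self E₀ k _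
          have h6 : Lk E₀ k (Lk E₀ k v) = Lk E₀ k v := by omega
          right; left
          have := stepEdges_mem_prop h2 hvm
          rw [h6] at this
          rwa [hc]
        · -- ∃ w, (w, v) ∈ E_k, L w = L v
          have hne : v ≠ Lk E₀ k w := by rw [hlw]; exact fun h => hm h.symm
          right; left
          have := stepEdges_mem_prop hw hne
          rw [hlw] at this
          rwa [hc]
      · -- label came from an edge (w, v)
        right; left
        have := stepEdges_mem_prop hw hnw
        rwa [← hc] at this

/-! ### soundness -/

lemma conn_symm {E : Multiset (ℕ × ℕ)} : Symmetric (EdgeConn E) :=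
  fun a b h => by
    haveI : Std.Symm (fun a b : ℕ => (a, b) ∈ E ∨ (b, a) ∈ E) :=
      ⟨fun _ _ h => h.elim Or.inr Or.inl⟩
    exact (Relation.ReflTransGen.symmetric (r := fun a b : ℕ => (a, b) ∈ E ∨ (b, a) ∈ E)).symm a b h

lemma sound (k : ℕ) :
    (∀ e ∈ Ek E₀ k, EdgeConn E₀.val e.1 e.2) ∧
      (∀ v, EdgeConn E₀.val v (Lk E₀ k v)) := by
  induction k with
  | zero =>
      constructor
      · intro e he
        exact Relation.ReflTransGen.single (Or.inl he)
      · intro v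
        rcases initLabels_spec E₀ v with h | h
        · rw [Lk_zero, h]; exact Relation.ReflTransGen.refl
        · exact Relation.ReflTransGen.single (Or.inl h)

  | succ k ih =>
      obtain ⟨ihE, ihL⟩ := ih
      constructor
      · intro e he
        rw [Ek_succ] at he
        obtain ⟨p, q, hpq, hcase⟩ := stepEdges_inv he
        have h1 : EdgeConn E₀.val p q := ihE _ hpq
        rcases hcase with ⟨_, rfl⟩ | ⟨_, rfl⟩
        · exact conn_symm h1
        · exact (conn_symm h1).trans (ihL p)
      · intro v
        rw [Lk_succ]
        rcases stepLabels_cases (Lk E₀ k) (Ek E₀ k) v with hc | ⟨w, hw, _, hc⟩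
        · rw [hc]; exact ihL v
        · rw [hc]
          exact (conn_symm (ihE _ hw)).trans (ihL w)

/-! ### Gconn and completeness -/

def Gconn (k : ℕ) (a b : ℕ) : Prop :=
  Relation.ReflTransGen
    (fun x y => (x, y) ∈ Ek E₀ k ∨ (y, x) ∈ Ek E₀ k ∨ y = Lk E₀ k x ∨ x = Lk E₀ k y) a b

lemma gconn_symm {k a b : ℕ} (h : Gconn E₀ k a b) : Gconn E₀ k b a :=
  by
    haveI : Std.Symm (fun x y : ℕ => (x, y) ∈ Ek E₀ k ∨ (y, x) ∈ Ek E₀ k ∨ y = Lk E₀ k x ∨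
        x = Lk E₀ k y) := ⟨fun _ _ h => by tauto⟩
    exact (Relation.ReflTransGen.symmetric (r := fun x y : ℕ => (x, y) ∈ Ek E₀ k ∨
      (y, x) ∈ Ek E₀ k ∨ y = Lk E₀ k x ∨ x = Lk E₀ k y)).symm a b h

lemma kl (k : ℕ) : ∀ p, Gconn E₀ (k + 1) p (Lk E₀ k p) := by
  intro p
  induction p using Nat.strong_induction_on with
  | _ p ih =>
    by_cases hm : Lk E₀ k p = p
    · rw [hm]; exact Relation.ReflTransGen.refl
    have hmp : Lk E₀ k p < p := lt_of_le_of_ne (Lk_le_self E₀ k p) hm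
    rcases s2 E₀ k p with h0 | h1 | h2 | ⟨w, hw, hlw⟩
    · exact absurd h0 hm
    · refine Relation.ReflTransGen.single (Or.inr (Or.inl ?_))
      rw [Ek_succ]
      exact stepEdges_mem_sym h1 rfl
    · -- (m, p) ∈ E_k
      have hp : p ≠ Lk E₀ k (Lk E₀ k p) := by
        intro hEq
        have := Lk_le_self E₀ k (Lk E₀ k p)
        omega
      have hedge : (p, Lk E₀ k (Lk E₀ k p)) ∈ Ek E₀ (k + 1) := by
        rw [Ek_succ]; exact stepEdges_mem_prop h2 hp
      have h3 : Gconn E₀ (k + 1) p (Lk E₀ k (Lk E₀ k p)) :=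
        Relation.ReflTransGen.single (Or.inl hedge)
      exact h3.trans (gconn_symm E₀ (ih _ hmp))
    · have hne : p ≠ Lk E₀ k w := by rw [hlw]; exact fun h => hm h.symm
      have hedge : (p, Lk E₀ k w) ∈ Ek E₀ (k + 1) := by
        rw [Ek_succ]; exact stepEdges_mem_prop hw hne
      rw [hlw] at hedge
      exact Relation.ReflTransGen.single (Or.inl hedge)

lemma edge_lift {k p q : ℕ} (h : (p, q) ∈ Ek E₀ k) : Gconn E₀ (k + 1) p q := by
  by_cases hq : q = Lk E₀ k p
  · refine Relation.ReflTransGen.single (Or.inr (Or.inl ?_))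
    rw [Ek_succ]; exact stepEdges_mem_sym h hq
  · have hedge : (q, Lk E₀ k p) ∈ Ek E₀ (k + 1) := by
      rw [Ek_succ]; exact stepEdges_mem_prop h hq
    exact (kl E₀ k p).trans (Relation.ReflTransGen.single (Or.inr (Or.inl hedge)))

lemma gconn_lift {k a b : ℕ} (h : Gconn E₀ k a b) : Gconn E₀ (k + 1) a b := by
  induction h with
  | refl => exact Relation.ReflTransGen.refl
  | tail _ hrel ih =>
      refine ih.trans ?_
      rcases hrel with h1 | h2 | h3 | h4
      · exact edge_lift E₀ h1
      · exact gconn_symm E₀ (edge_lift E₀ h2)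
      · rw [h3]; exact kl E₀ k _
      · rw [h4]; exact gconn_symm E₀ (kl E₀ k _)

lemma comp (k : ℕ) {a b : ℕ} (h : (a, b) ∈ E₀.val) : Gconn E₀ k a b := by
  induction k with
  | zero => exact Relation.ReflTransGen.single (Or.inl h)
  | succ k ih => exact gconn_lift E₀ ih

lemma gconn_sound {k a b : ℕ} (h : Gconn E₀ k a b) : EdgeConn E₀.val a b := by
  induction h with
  | refl => exact Relation.ReflTransGen.refl
  | tail _ hrel ih =>
      refine ih.trans ?_
      rcases hrel with h1 | h2 | h3 | h4
      · exact (sound E₀ k).1 _ h1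
      · exact conn_symm ((sound E₀ k).1 _ h2)
      · rw [h3]; exact (sound E₀ k).2 _
      · rw [h4]; exact conn_symm ((sound E₀ k).2 _)

/-! ### vertex set and termination -/

def Vs : Finset ℕ := E₀.image Prod.fst ∪ E₀.image Prod.snd

lemma vs_inv (k : ℕ) :
    (∀ e ∈ Ek E₀ k, e.1 ∈ Vs E₀ ∧ e.2 ∈ Vs E₀) ∧
      (∀ v ∈ Vs E₀, Lk E₀ k v ∈ Vs E₀) ∧ (∀ v ∉ Vs E₀, Lk E₀ k v = v) := by
  induction k with
  | zero =>
      refine ⟨?_, ?_, ?_⟩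
      · intro e he
        have he' : e ∈ E₀ := he
        exact ⟨Finset.mem_union_left _ (Finset.mem_image_of_mem _ he'),
          Finset.mem_union_right _ (Finset.mem_image_of_mem _ he')⟩
      · intro v hv
        rcases initLabels_spec E₀ v with h | h
        · rw [Lk_zero, h]; exact hv
        · exact Finset.mem_union_right _ (Finset.mem_image_of_mem Prod.snd h)
      · intro v hv
        rcases initLabels_spec E₀ v with h | h
        · exact h
        · exact absurd (Finset.mem_union_left _ (Finset.mem_image_of_mem Prod.fst h)) hv
  | succ k ih =>
      obtain ⟨ihE, ihL, ihN⟩ := ih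
      refine ⟨?_, ?_, ?_⟩
      · intro e he
        rw [Ek_succ] at he
        obtain ⟨p, q, hpq, hcase⟩ := stepEdges_inv he
        obtain ⟨hp, hq⟩ := ihE _ hpq
        rcases hcase with ⟨_, rfl⟩ | ⟨_, rfl⟩
        · exact ⟨hq, hp⟩
        · exact ⟨hq, ihL p hp⟩
      · intro v hv
        rw [Lk_succ]
        rcases stepLabels_cases (Lk E₀ k) (Ek E₀ k) v with hc | ⟨w, hw, _, hc⟩
        · rw [hc]; exact ihL v hv
        · rw [hc]; exact ihL w (ihE _ hw).1
      · intro v hv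
        rw [Lk_succ]
        rcases stepLabels_cases (Lk E₀ k) (Ek E₀ k) v with hc | ⟨w, hw, _, hc⟩
        · rw [hc]; exact ihN v hv
        · exact absurd (ihE _ hw).2 hv

end LPProof


namespace LPProof

variable (E₀ : Finset (ℕ × ℕ))

/-- existence of a stabilization point -/
lemma exists_stable : ∃ K : ℕ, ∀ k : ℕ, K ≤ k → Lk E₀ k = Lk E₀ K := by
  set f : ℕ → ℕ := fun k => ∑ v ∈ Vs E₀, Lk E₀ k v with hf
  have hanti : Antitone f := by
    apply antitone_nat_of_succ_le
    intro k
    exact Finset.sum_le_sum fun v _ => Lk_succ_le E₀ k v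
  obtain ⟨K, hK⟩ : ∃ K, f K = sInf (Set.range f) := Nat.sInf_mem (Set.range_nonempty f)
  have hmin : ∀ k, f K ≤ f k := fun k => hK ▸ Nat.sInf_le ⟨k, rfl⟩
  refine ⟨K, fun k hk => ?_⟩
  funext v
  by_cases hv : v ∈ Vs E₀
  · have hsum : f k = f K := le_antisymm (hanti hk) (hmin k)
    have hle : ∀ i ∈ Vs E₀, Lk E₀ k i ≤ Lk E₀ K i := fun i _ => Lk_anti E₀ i hk
    exact (Finset.sum_eq_sum_iff_of_le hle).1 hsum v hv
  · rw [(vs_inv E₀ k).2.2 v hv, (vs_inv E₀ K).2.2 v hv]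

section Stable

variable {E₀} {K : ℕ} (hst : ∀ k : ℕ, K ≤ k → Lk E₀ k = Lk E₀ K)

include hst

/-- at a stable point, every propagating edge satisfies `L q ≤ L p` -/
lemma stable_edge_le (k : ℕ) (hk : K ≤ k) {p q : ℕ} (h : (p, q) ∈ Ek E₀ k)
    (hne : q ≠ Lk E₀ K p) : Lk E₀ K q ≤ Lk E₀ K p := by
  have h1 : Lk E₀ (k + 1) q ≤ Lk E₀ k p := by
    rw [Lk_succ]
    refine stepLabels_le_edge h ?_
    rwa [hst k hk]
  rwa [hst (k + 1) (le_trans hk (Nat.le_succ k)), hst k hk] at h1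

/-- at a stable point, the label function is idempotent -/
lemma stable_idem (v : ℕ) : Lk E₀ K (Lk E₀ K v) = Lk E₀ K v := by
  refine le_antisymm (Lk_le_self E₀ K _) ?_
  by_cases hm : Lk E₀ K v = v
  · have h1 : Lk E₀ K (Lk E₀ K v) = Lk E₀ K v := by rw [hm]; exact hm
    exact h1.ge
  have hmv : Lk E₀ K v < v := lt_of_le_of_ne (Lk_le_self E₀ K v) hm
  have hne : ∀ j, K ≤ j → v ≠ Lk E₀ K (Lk E₀ K v) → True := fun _ _ _ => trivial
  have hcontra : v ≠ Lk E₀ K (Lk E₀ K v) := by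
    intro hEq
    have := Lk_le_self E₀ K (Lk E₀ K v)
    omega
  rcases s2 E₀ K v with h0 | h1 | h2 | ⟨w, hw, hlw⟩
  · exact absurd h0 hm
  · -- (v, m) ∈ E_K with m = L v; symmetrized edge (m, v) ∈ E_{K+1}
    have hedge : (Lk E₀ K v, v) ∈ Ek E₀ (K + 1) := by
      rw [Ek_succ, hst K le_rfl]
      exact stepEdges_mem_sym h1 rfl
    exact stable_edge_le hst (K + 1) (Nat.le_succ K) hedge hcontra
  · exact stable_edge_le hst K le_rfl h2 hcontra
  · -- (w, v) ∈ E_K with L w = L v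
    have hvw : v ≠ Lk E₀ K w := by rw [hlw]; exact fun h => hm h.symm
    have hedge1 : (v, Lk E₀ K v) ∈ Ek E₀ (K + 1) := by
      rw [Ek_succ, hst K le_rfl, ← hlw]
      exact stepEdges_mem_prop hw hvw
    have hedge2 : (Lk E₀ K v, v) ∈ Ek E₀ (K + 2) := by
      rw [Ek_succ, hst (K + 1) (Nat.le_succ K)]
      exact stepEdges_mem_sym hedge1 rfl
    exact stable_edge_le hst (K + 2) (by omega) hedge2 hcontra

/-- at a stable point, every edge has equal labels at its endpoints -/
lemma stable_edge_eq (k : ℕ) (hk : K ≤ k) {p q : ℕ} (h : (p, q) ∈ Ek E₀ k) :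
    Lk E₀ K p = Lk E₀ K q := by
  by_cases hq : q = Lk E₀ K p
  · rw [hq, stable_idem hst p]
  · have h1 : Lk E₀ K q ≤ Lk E₀ K p := stable_edge_le hst k hk h hq
    have h2 : (q, Lk E₀ K p) ∈ Ek E₀ (k + 1) := by
      rw [Ek_succ, hst k hk]
      exact stepEdges_mem_prop h hq
    by_cases hq2 : Lk E₀ K p = Lk E₀ K q
    · exact hq2
    · have h3 : Lk E₀ K (Lk E₀ K p) ≤ Lk E₀ K q :=
        stable_edge_le hst (k + 1) (le_trans hk (Nat.le_succ k)) h2 hq2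
      rw [stable_idem hst p] at h3
      exact le_antisymm h3 h1

/-- at a stable point, Gconn-related vertices have equal labels -/
lemma stable_gconn_eq {a b : ℕ} (h : Gconn E₀ K a b) : Lk E₀ K a = Lk E₀ K b := by
  induction h with
  | refl => rfl
  | tail _ hrel ih =>
      refine ih.trans ?_
      rcases hrel with h1 | h2 | h3 | h4
      · exact stable_edge_eq hst K le_rfl h1
      · exact (stable_edge_eq hst K le_rfl h2).symm
      · rw [h3, stable_idem hst]
      · rw [h4, stable_idem hst]

/-- at a stable point, connected vertices have equal labels -/
lemma stable_conn_eq {a b : ℕ} (h : EdgeConn E₀.val a b) : Lk E₀ K a = Lk E₀ K b := by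
  induction h with
  | refl => rfl
  | tail _ hrel ih =>
      refine ih.trans ?_
      rcases hrel with h1 | h2
      · exact stable_gconn_eq hst (comp E₀ K h1)
      · exact (stable_gconn_eq hst (comp E₀ K h2)).symm

end Stable

end LPProof

/-- The label propagation algorithm terminates (the label arrays
stabilize) with every vertex assigned the minimum vertex label of its connected
component, i.e. it correctly computes the connected components of `G`. -/
theorem lp_correctness
    (E₀ : Finset (ℕ × ℕ)) (hsym : IsSym E₀) (hloop : Loopless E₀) :
    ∃ K : ℕ, (∀ k : ℕ, K ≤ k → (lpRun E₀ k).2 = (lpRun E₀ K).2) ∧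
      ∀ v : ℕ, (lpRun E₀ K).2 v = sInf {u : ℕ | EdgeConn E₀.val v u} := by
  obtain ⟨K, hst⟩ := LPProof.exists_stable E₀
  refine ⟨K, hst, fun v => ?_⟩
  refine le_antisymm ?_ ?_
  · refine le_csInf ⟨v, Relation.ReflTransGen.refl⟩ fun u hu => ?_
    have h1 : LPProof.Lk E₀ K v = LPProof.Lk E₀ K u := LPProof.stable_conn_eq hst hu
    show LPProof.Lk E₀ K v ≤ u
    exact h1.trans_le (LPProof.Lk_le_self E₀ K u)
  · exact Nat.sInf_le ((LPProof.sound E₀ K).2 v)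
end

section
/- On the sequentially labeled path graph with n vertices, the label propagation algorithm converges (all vertices have label 1) within ⌈log_φ n⌉ + O(1) steps, where φ = (1+√5)/2 is the golden ratio; in particular convergence takes O(log n) steps. -/
/-- The sequentially labeled path graph on vertices `1, …, n`, with both orientations of
each edge `{i, i+1}`. -/
def pathEdges (n : ℕ) : Finset (ℕ × ℕ) :=
  ((Finset.Ico 1 n).image fun i => (i, i + 1)) ∪ ((Finset.Ico 1 n).image fun i => (i + 1, i))

/-- Closed form of the edge multiset after `k` steps on the path. -/
def pE (n k : ℕ) : Multiset (ℕ × ℕ) :=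
  ((Finset.Ico 1 n).val.map fun i => (max 1 (i + 1 - Nat.fib (k+1)), i + 1))
  + ((Finset.Ico 1 n).val.map fun i => (i + 1, max 1 (i + 1 - Nat.fib (k+2))))

/-- Closed form of the labels after `k` steps on the path. -/
def pL (n k : ℕ) : ℕ → ℕ := fun v =>
  if 1 ≤ v ∧ v ≤ n then max 1 (v - Nat.fib (k+2)) else v

lemma pL_in {n k v : ℕ} (h1 : 1 ≤ v) (h2 : v ≤ n) :
    pL n k v = max 1 (v - Nat.fib (k+2)) := by
  simp [pL, h1, h2]

lemma fib1_pos (k : ℕ) : 1 ≤ Nat.fib (k+1) := Nat.fib_pos.2 (Nat.succ_pos k)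

lemma stepE (n k : ℕ) : stepEdges (pL n k) (pE n k) = pE n (k+1) := by
  unfold stepEdges pE
  rw [Multiset.map_add, Multiset.map_map, Multiset.map_map, add_comm]
  congr 1
  · -- old backward edges become new forward edges
    refine Multiset.map_congr rfl (fun i hi => ?_)
    rw [Finset.mem_val, Finset.mem_Ico] at hi
    have hL : pL n k (i+1) = max 1 (i + 1 - Nat.fib (k+2)) :=
      pL_in (by omega) (by omega)
    simp only [Function.comp_apply, hL, if_pos rfl]
    rfl
  · -- old forward edges become new backward edges
    refine Multiset.map_congr rfl (fun i hi => ?_)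
    rw [Finset.mem_val, Finset.mem_Ico] at hi
    have hf := fib1_pos k
    set a := max 1 (i + 1 - Nat.fib (k+1)) with ha
    have ha1 : 1 ≤ a := le_max_left _ _
    have han : a ≤ n := by omega
    have hL : pL n k a = max 1 (a - Nat.fib (k+2)) := pL_in ha1 han
    have hne : ¬ (i + 1 = pL n k a) := by rw [hL]; omega
    have hfib : Nat.fib (k+1+2) = Nat.fib (k+1) + Nat.fib (k+2) := Nat.fib_add_two
    simp only [Function.comp_apply]
    rw [if_neg hne, hL, Prod.ext_iff]
    exact ⟨rfl, by omega⟩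

lemma stepL (n k : ℕ) : stepLabels (pL n k) (pE n k) = pL n (k+1) := by
  funext u
  unfold stepLabels pE
  rw [Multiset.filter_add]
  have hback : Multiset.filter (fun e => e.2 = u ∧ e.2 ≠ pL n k e.1)
      ((Finset.Ico 1 n).val.map fun i => (i + 1, max 1 (i + 1 - Nat.fib (k+2)))) = 0 := by
    rw [Multiset.filter_eq_nil]
    intro e he
    simp only [Multiset.mem_map, Finset.mem_val, Finset.mem_Ico] at he
    obtain ⟨i, hi, rfl⟩ := he
    have hL : pL n k (i+1) = max 1 (i + 1 - Nat.fib (k+2)) := pL_in (by omega) (by omega)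
    simp [hL]
  rw [hback, add_zero, Multiset.filter_map]
  have hcong : Multiset.filter
      ((fun e : ℕ × ℕ => e.2 = u ∧ e.2 ≠ pL n k e.1) ∘
        (fun i => (max 1 (i + 1 - Nat.fib (k+1)), i + 1))) (Finset.Ico 1 n).val
      = Multiset.filter (fun i => i + 1 = u) (Finset.Ico 1 n).val := by
    refine Multiset.filter_congr (fun i hi => ?_)
    rw [Finset.mem_val, Finset.mem_Ico] at hi
    have hf := fib1_pos k
    set a := max 1 (i + 1 - Nat.fib (k+1)) with ha
    have hL : pL n k a = max 1 (a - Nat.fib (k+2)) := pL_in (le_max_left _ _) (by omega)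
    simp only [Function.comp_apply, ne_eq, hL]
    constructor
    · rintro ⟨h, -⟩; exact h
    · intro h; exact ⟨h, by
        have hL' : pL n k (max 1 (i + 1 - Nat.fib (k+1))) = max 1 (max 1 (i + 1 - Nat.fib (k+1)) - Nat.fib (k+2)) := hL
        omega⟩
  rw [hcong, ← Finset.filter_val]
  by_cases hu : 2 ≤ u ∧ u ≤ n
  · have hset : (Finset.Ico 1 n).filter (fun i => i + 1 = u) = {u - 1} := by
      ext i
      simp only [Finset.mem_filter, Finset.mem_Ico, Finset.mem_singleton]
      omega
    rw [hset]
    have hL1 : pL n k u = max 1 (u - Nat.fib (k+2)) := pL_in (by omega) (by omega)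
    set a := max 1 (u - 1 + 1 - Nat.fib (k+1)) with ha
    have hf := fib1_pos k
    have hL2 : pL n k a = max 1 (a - Nat.fib (k+2)) := pL_in (le_max_left _ _) (by omega)
    have hfib : Nat.fib (k+1+2) = Nat.fib (k+1) + Nat.fib (k+2) := Nat.fib_add_two
    have hout : pL n (k+1) u = max 1 (u - Nat.fib (k+1+2)) := pL_in (by omega) (by omega)
    simp only [Finset.singleton_val, Multiset.map_singleton, Multiset.fold_singleton,
      hL1, hL2, hout]
    have hf2 := fib1_pos (k+1)
    have hL2' : pL n k (max 1 (u - 1 + 1 - Nat.fib (k+1))) = max 1 (max 1 (u - 1 + 1 - Nat.fib (k+1)) - Nat.fib (k+2)) := hL2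
    omega
  · have hset : (Finset.Ico 1 n).filter (fun i => i + 1 = u) = ∅ := by
      ext i
      simp only [Finset.mem_filter, Finset.mem_Ico, Finset.notMem_empty, iff_false]
      omega
    rw [hset]
    simp only [Finset.empty_val, Multiset.map_zero, Multiset.fold_zero]
    unfold pL
    have hf := fib1_pos (k+1)
    have hf2 := fib1_pos k
    by_cases h1 : 1 ≤ u ∧ u ≤ n
    · rw [if_pos h1, if_pos h1]; omega
    · rw [if_neg h1, if_neg h1]
lemma pathEdges_val (n : ℕ) : (pathEdges n).val = pE n 0 := by
  unfold pathEdges pE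
  have hdisj : Disjoint ((Finset.Ico 1 n).image fun i => (i, i + 1))
      ((Finset.Ico 1 n).image fun i => (i + 1, i)) := by
    rw [Finset.disjoint_left]
    intro e h1 h2
    simp only [Finset.mem_image, Finset.mem_Ico] at h1 h2
    obtain ⟨i, hi, rfl⟩ := h1
    obtain ⟨j, hj, hji⟩ := h2
    rw [Prod.ext_iff] at hji
    omega
  rw [← Finset.disjUnion_eq_union _ _ hdisj]
  show _ + _ = _
  have h1 : ((Finset.Ico 1 n).image fun i => (i, i + 1)).val
      = (Finset.Ico 1 n).val.map fun i => (i, i + 1) :=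
    Finset.image_val_of_injOn (fun a _ b _ h => by
      rw [Prod.ext_iff] at h; exact h.1)
  have h2 : ((Finset.Ico 1 n).image fun i => (i + 1, i)).val
      = (Finset.Ico 1 n).val.map fun i => (i + 1, i) :=
    Finset.image_val_of_injOn (fun a _ b _ h => by
      rw [Prod.ext_iff] at h; exact h.2)
  rw [h1, h2]
  congr 1
  · refine Multiset.map_congr rfl (fun i hi => ?_)
    rw [Finset.mem_val, Finset.mem_Ico] at hi
    have : Nat.fib 1 = 1 := rfl
    rw [Prod.ext_iff]
    refine ⟨?_, rfl⟩
    show i = max 1 (i + 1 - Nat.fib 1)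
    omega
  · refine Multiset.map_congr rfl (fun i hi => ?_)
    rw [Finset.mem_val, Finset.mem_Ico] at hi
    have : Nat.fib 2 = 1 := rfl
    rw [Prod.ext_iff]
    refine ⟨rfl, ?_⟩
    show i = max 1 (i + 1 - Nat.fib 2)
    omega

lemma mem_pathEdges {n : ℕ} {a b : ℕ} :
    (a, b) ∈ pathEdges n ↔ (1 ≤ a ∧ a + 1 ≤ n ∧ b = a + 1) ∨ (2 ≤ a ∧ a ≤ n ∧ b + 1 = a) := by
  unfold pathEdges
  simp only [Finset.mem_union, Finset.mem_image, Finset.mem_Ico, Prod.ext_iff]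
  constructor
  · rintro (⟨i, hi, h1, h2⟩ | ⟨i, hi, h1, h2⟩) <;> omega
  · rintro (⟨h1, h2, h3⟩ | ⟨h1, h2, h3⟩)
    · exact Or.inl ⟨a, by omega, rfl, by omega⟩
    · exact Or.inr ⟨b, by omega, by omega, rfl⟩

lemma initLabels_eq (n : ℕ) : initLabels (pathEdges n) = pL n 0 := by
  funext v
  unfold initLabels
  have hmem : ∀ x, x ∈ insert v (((pathEdges n).filter (fun e => e.1 = v)).image Prod.snd)
      ↔ x = v ∨ (v, x) ∈ pathEdges n := by
    intro x
    simp only [Finset.mem_insert, Finset.mem_image, Finset.mem_filter]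
    constructor
    · rintro (h | ⟨e, ⟨he, h1⟩, h2⟩)
      · exact Or.inl h
      · right; rwa [show (v, x) = e by rw [Prod.ext_iff]; exact ⟨h1.symm, h2.symm⟩]
    · rintro (h | h)
      · exact Or.inl h
      · exact Or.inr ⟨(v, x), ⟨h, rfl⟩, rfl⟩
  apply le_antisymm
  · -- min' ≤ pL n 0 v
    apply Finset.min'_le
    rw [hmem]
    have hf02 : Nat.fib (0+2) = 1 := rfl
    by_cases h : 1 ≤ v ∧ v ≤ n
    · rcases Nat.lt_or_ge v 2 with hv | hv
      · left; rw [pL_in h.1 h.2]; omega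
      · right
        rw [pL_in h.1 h.2, mem_pathEdges]
        right
        exact ⟨hv, h.2, by omega⟩
    · left; simp [pL, h]
  · -- pL n 0 v ≤ every element
    apply Finset.le_min'
    intro y hy
    rw [hmem] at hy
    unfold pL
    have hf02 : Nat.fib (0+2) = 1 := rfl
    rcases hy with rfl | hy
    · split
      · next h => omega
      · exact le_rfl
    · rw [mem_pathEdges] at hy
      split
      · next h => omega
      · next h => omega
lemma runEq (n k : ℕ) : lpRun (pathEdges n) k = (pE n k, pL n k) := by
  induction k with
  | zero =>
    unfold lpRun
    rw [Function.iterate_zero_apply, pathEdges_val, initLabels_eq]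
  | succ k ih =>
    unfold lpRun at ih ⊢
    rw [Function.iterate_succ_apply', ih]
    unfold lpStep
    rw [Prod.ext_iff]
    exact ⟨stepE n k, stepL n k⟩

lemma phi_pow_le_fib (k : ℕ) :
    ((1 + Real.sqrt 5) / 2) ^ k ≤ (Nat.fib (k + 2) : ℝ) := by
  have h5 : Real.sqrt 5 ^ 2 = 5 := Real.sq_sqrt (by norm_num)
  have h5le : Real.sqrt 5 ≤ 3 := by
    nlinarith [Real.sqrt_nonneg 5]
  have h5ge : 1 ≤ Real.sqrt 5 := by
    nlinarith [Real.sqrt_nonneg 5]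
  induction k using Nat.twoStepInduction with
  | zero => norm_num
  | one =>
    have : Nat.fib 3 = 2 := rfl
    rw [this]
    push_cast
    linarith
  | more k ih1 ih2 =>
    have key : ((1 + Real.sqrt 5) / 2) ^ (k + 2)
        = ((1 + Real.sqrt 5) / 2) ^ (k + 1) + ((1 + Real.sqrt 5) / 2) ^ k := by
      have hsq : ((1 + Real.sqrt 5) / 2) ^ 2 = (1 + Real.sqrt 5) / 2 + 1 := by
        nlinarith
      calc ((1 + Real.sqrt 5) / 2) ^ (k + 2)
          = ((1 + Real.sqrt 5) / 2) ^ k * ((1 + Real.sqrt 5) / 2) ^ 2 := by ring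
        _ = ((1 + Real.sqrt 5) / 2) ^ k * ((1 + Real.sqrt 5) / 2 + 1) := by rw [hsq]
        _ = ((1 + Real.sqrt 5) / 2) ^ (k + 1) + ((1 + Real.sqrt 5) / 2) ^ k := by ring
    rw [key]
    have hfib : Nat.fib (k + 2 + 2) = Nat.fib (k + 2) + Nat.fib (k + 3) := Nat.fib_add_two
    rw [hfib]
    push_cast
    linarith
/-- On the sequentially labeled path with `n` vertices the algorithm
converges (every vertex has label `1`) within `⌈log_φ n⌉ + O(1)` steps, where
`φ = (1+√5)/2` is the golden ratio; in particular convergence takes `O(log n)` steps. -/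
theorem lp_path_convergence_log :
    ∃ C : ℕ, ∀ n k : ℕ, 1 ≤ n →
      (⌈Real.logb ((1 + Real.sqrt 5) / 2) (n : ℝ)⌉.toNat + C ≤ k) →
      ∀ v : ℕ, 1 ≤ v → v ≤ n → (lpRun (pathEdges n) k).2 v = 1 := by
  refine ⟨0, fun n k hn hk v hv1 hvn => ?_⟩
  rw [runEq]
  have h5 : Real.sqrt 5 ^ 2 = 5 := Real.sq_sqrt (by norm_num)
  have h5ge : 1 < Real.sqrt 5 := by nlinarith [Real.sqrt_nonneg 5]
  have hφ : 1 < (1 + Real.sqrt 5) / 2 := by linarith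
  set x := Real.logb ((1 + Real.sqrt 5) / 2) (n : ℝ) with hx
  have hxk : x ≤ (k : ℝ) := by
    calc x ≤ (⌈x⌉ : ℝ) := Int.le_ceil x
      _ ≤ ((⌈x⌉.toNat : ℤ) : ℝ) := by exact_mod_cast Int.self_le_toNat _
      _ ≤ (k : ℝ) := by
          have : ⌈x⌉.toNat ≤ k := by omega
          exact_mod_cast this
  have hnk : (n : ℝ) ≤ ((1 + Real.sqrt 5) / 2) ^ k := by
    have h1 : ((1 + Real.sqrt 5) / 2) ^ x ≤ ((1 + Real.sqrt 5) / 2) ^ (k : ℝ) :=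
      Real.rpow_le_rpow_of_exponent_le (le_of_lt hφ) hxk
    rw [hx, Real.rpow_logb (by linarith) (ne_of_gt hφ) (by exact_mod_cast hn),
      Real.rpow_natCast] at h1
    exact h1
  have hfin : (n : ℝ) ≤ (Nat.fib (k + 2) : ℝ) := le_trans hnk (phi_pow_le_fib k)
  have hfn : n ≤ Nat.fib (k + 2) := by exact_mod_cast hfin
  rw [show (pE n k, pL n k).2 = pL n k from rfl, pL_in hv1 hvn]
  omega
end

section
/- On any path graph with 4 vertices (with arbitrary distinct labels), the label propagation algorithm converges to a star rooted at the minimum-labeled vertex in at most three steps. -/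
def lpCheck (a b c d : ℕ) : Bool :=
  (a = b || a = c || a = d || b = c || b = d || c = d) ||
  decide ((∀ v ∈ ({a, b, c, d} : Finset ℕ),
        (lpRun ({(a, b), (b, a), (b, c), (c, b), (c, d), (d, c)} : Finset (ℕ × ℕ)) 3).2 v
          = min (min a b) (min c d)) ∧
      ∀ e ∈ (lpRun ({(a, b), (b, a), (b, c), (c, b), (c, d), (d, c)} : Finset (ℕ × ℕ)) 3).1,
        e.1 = min (min a b) (min c d) ∨ e.2 = min (min a b) (min c d))

theorem lp_base : ∀ a < 4, ∀ b < 4, ∀ c < 4, ∀ d < 4, lpCheck a b c d = true := by decide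

theorem lp_base' (a b c d : ℕ) (ha : a < 4) (hb : b < 4) (hc : c < 4) (hd : d < 4)
    (hab : a ≠ b) (hac : a ≠ c) (had : a ≠ d)
    (hbc : b ≠ c) (hbd : b ≠ d) (hcd : c ≠ d) :
    (∀ v ∈ ({a, b, c, d} : Finset ℕ),
        (lpRun ({(a, b), (b, a), (b, c), (c, b), (c, d), (d, c)} : Finset (ℕ × ℕ)) 3).2 v
          = min (min a b) (min c d)) ∧
      ∀ e ∈ (lpRun ({(a, b), (b, a), (b, c), (c, b), (c, d), (d, c)} : Finset (ℕ × ℕ)) 3).1,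
        e.1 = min (min a b) (min c d) ∨ e.2 = min (min a b) (min c d) := by
  have h := lp_base a ha b hb c hc d hd
  simp only [lpCheck, hab, hac, had, hbc, hbd, hcd, decide_false, Bool.false_or,
    Bool.or_self, decide_eq_true_eq] at h
  exact h

theorem fold_min_map (f : ℕ → ℕ) (hf : Monotone f) (b : ℕ) (m : Multiset ℕ) :
    f (m.fold min b) = (m.map f).fold min (f b) := by
  induction m using Multiset.induction_on with
  | empty => simp
  | cons x m ih => simp [Multiset.fold_cons_left, hf.map_min, ih]

theorem fold_min_mem (S : Finset ℕ) (b : ℕ) (m : Multiset ℕ) (hb : b ∈ S)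
    (hm : ∀ x ∈ m, x ∈ S) : m.fold min b ∈ S := by
  induction m using Multiset.induction_on with
  | empty => simpa
  | cons x m ih =>
    rw [Multiset.fold_cons_left]
    rcases min_choice x (m.fold min b) with h | h <;> rw [h]
    · exact hm x (Multiset.mem_cons_self _ _)
    · exact ih fun y hy => hm y (Multiset.mem_cons_of_mem hy)

theorem stepEdges_mem (S : Finset ℕ) (L : ℕ → ℕ) (E : Multiset (ℕ × ℕ))
    (hE : ∀ e ∈ E, e.1 ∈ S ∧ e.2 ∈ S) (hL : ∀ v ∈ S, L v ∈ S) :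
    ∀ e ∈ stepEdges L E, e.1 ∈ S ∧ e.2 ∈ S := by
  intro e he
  rw [stepEdges, Multiset.mem_map] at he
  obtain ⟨p, hp, rfl⟩ := he
  obtain ⟨h1, h2⟩ := hE p hp
  by_cases h : p.2 = L p.1
  · rw [if_pos h]; exact ⟨h2, h1⟩
  · rw [if_neg h]; exact ⟨h2, hL _ h1⟩

theorem stepLabels_mem (S : Finset ℕ) (L : ℕ → ℕ) (E : Multiset (ℕ × ℕ))
    (hE : ∀ e ∈ E, e.1 ∈ S ∧ e.2 ∈ S) (hL : ∀ v ∈ S, L v ∈ S) :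
    ∀ v ∈ S, stepLabels L E v ∈ S := by
  intro v hv
  apply fold_min_mem S _ _ (hL v hv)
  intro x hx
  rw [Multiset.mem_map] at hx
  obtain ⟨p, hp, rfl⟩ := hx
  exact hL _ (hE p (Multiset.mem_of_mem_filter hp)).1

theorem stepEdges_sim (f : ℕ → ℕ) (hf : Monotone f) (S : Finset ℕ)
    (hinj : Set.InjOn f S) (L L' : ℕ → ℕ) (E : Multiset (ℕ × ℕ))
    (hE : ∀ e ∈ E, e.1 ∈ S ∧ e.2 ∈ S) (hL : ∀ v ∈ S, L v ∈ S)
    (hL' : ∀ v ∈ S, L' (f v) = f (L v)) :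
    stepEdges L' (E.map (Prod.map f f)) = (stepEdges L E).map (Prod.map f f) := by
  rw [stepEdges, stepEdges, Multiset.map_map, Multiset.map_map]
  apply Multiset.map_congr rfl
  intro p hp
  obtain ⟨h1, h2⟩ := hE p hp
  simp only [Function.comp_apply, Prod.map_fst, Prod.map_snd]
  rw [hL' p.1 h1]
  by_cases h : p.2 = L p.1
  · rw [if_pos (by rw [h]), if_pos h]; rfl
  · rw [if_neg (fun hc => h (hinj h2 (hL p.1 h1) hc)), if_neg h]; rfl

theorem stepLabels_sim (f : ℕ → ℕ) (hf : Monotone f) (S : Finset ℕ)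
    (hinj : Set.InjOn f S) (L L' : ℕ → ℕ) (E : Multiset (ℕ × ℕ))
    (hE : ∀ e ∈ E, e.1 ∈ S ∧ e.2 ∈ S) (hL : ∀ v ∈ S, L v ∈ S)
    (hL' : ∀ v ∈ S, L' (f v) = f (L v)) :
    ∀ v ∈ S, stepLabels L' (E.map (Prod.map f f)) (f v) = f (stepLabels L E v) := by
  intro v hv
  rw [stepLabels, stepLabels, fold_min_map f hf, ← hL' v hv]
  congr 1
  rw [Multiset.filter_map, Multiset.map_map, Multiset.map_map]
  have hfil : E.filter ((fun e => e.2 = f v ∧ e.2 ≠ L' e.1) ∘ Prod.map f f)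
      = E.filter (fun e => e.2 = v ∧ e.2 ≠ L e.1) := by
    apply Multiset.filter_congr
    intro p hp
    obtain ⟨h1, h2⟩ := hE p hp
    simp only [Function.comp_apply, Prod.map_fst, Prod.map_snd]
    rw [hL' p.1 h1]
    constructor
    · rintro ⟨hx, hy⟩
      exact ⟨hinj h2 hv hx, fun hc => hy (by rw [hc])⟩
    · rintro ⟨hx, hy⟩
      exact ⟨by rw [hx], fun hc => hy (hinj h2 (hL p.1 h1) hc)⟩
  rw [hfil]
  apply Multiset.map_congr rfl
  intro p hp
  have hp' := Multiset.mem_of_mem_filter hp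
  simp only [Function.comp_apply, Prod.map_fst]
  rw [hL' p.1 (hE p hp').1]

theorem initLabels_mem (S : Finset ℕ) (E₀ : Finset (ℕ × ℕ))
    (hE₀ : ∀ e ∈ E₀, e.1 ∈ S ∧ e.2 ∈ S) (v : ℕ) (hv : v ∈ S) : initLabels E₀ v ∈ S := by
  rw [initLabels]
  have hm := Finset.min'_mem (insert v ((E₀.filter (fun e => e.1 = v)).image Prod.snd))
    (Finset.insert_nonempty _ _)
  rcases Finset.mem_insert.1 hm with h | h
  · rw [h]; exact hv
  · obtain ⟨e, he, hee⟩ := Finset.mem_image.1 h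
    rw [← hee]
    exact (hE₀ e (Finset.mem_of_mem_filter e he)).2

theorem initLabels_image (f : ℕ → ℕ) (hf : Monotone f) (S : Finset ℕ)
    (hinj : Set.InjOn f S) (E₀ : Finset (ℕ × ℕ))
    (hE₀ : ∀ e ∈ E₀, e.1 ∈ S ∧ e.2 ∈ S) (v : ℕ) (hv : v ∈ S) :
    initLabels (E₀.image (Prod.map f f)) (f v) = f (initLabels E₀ v) := by
  have key : insert (f v) (((E₀.image (Prod.map f f)).filter (fun e => e.1 = f v)).image Prod.snd)
      = (insert v ((E₀.filter (fun e => e.1 = v)).image Prod.snd)).image f := by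
    rw [Finset.filter_image]
    have h2 : E₀.filter (fun a => (Prod.map f f a).1 = f v) = E₀.filter (fun e => e.1 = v) := by
      apply Finset.filter_congr
      intro e he
      simp only [Prod.map_fst]
      exact ⟨fun h => hinj (hE₀ e he).1 hv h, fun h => by rw [h]⟩
    rw [h2, Finset.image_image, Finset.image_insert, Finset.image_image]
    rfl
  rw [initLabels, initLabels]
  simp only [key]
  exact Finset.min'_image hf _ _

theorem lpRun_succ (E₀ : Finset (ℕ × ℕ)) (k : ℕ) :
    lpRun E₀ (k + 1) = lpStep (lpRun E₀ k) :=
  Function.iterate_succ_apply' _ _ _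

theorem lpRun_sim (f : ℕ → ℕ) (hf : Monotone f) (S : Finset ℕ)
    (hinj : Set.InjOn f S) (E₀ : Finset (ℕ × ℕ))
    (hinjE : Set.InjOn (Prod.map f f) E₀)
    (hE₀ : ∀ e ∈ E₀, e.1 ∈ S ∧ e.2 ∈ S) (k : ℕ) :
    (lpRun (E₀.image (Prod.map f f)) k).1 = ((lpRun E₀ k).1).map (Prod.map f f)
    ∧ (∀ v ∈ S, (lpRun (E₀.image (Prod.map f f)) k).2 (f v) = f ((lpRun E₀ k).2 v))
    ∧ (∀ e ∈ (lpRun E₀ k).1, e.1 ∈ S ∧ e.2 ∈ S)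
    ∧ (∀ v ∈ S, (lpRun E₀ k).2 v ∈ S) := by
  induction k with
  | zero =>
    refine ⟨?_, ?_, ?_, ?_⟩
    · show (E₀.image (Prod.map f f)).val = E₀.val.map (Prod.map f f)
      exact Finset.image_val_of_injOn hinjE
    · intro v hv
      exact initLabels_image f hf S hinj E₀ hE₀ v hv
    · intro e he
      exact hE₀ e he
    · intro v hv
      exact initLabels_mem S E₀ hE₀ v hv
  | succ k ih =>
    obtain ⟨ih1, ih2, ih3, ih4⟩ := ih
    rw [lpRun_succ, lpRun_succ]
    refine ⟨?_, ?_, ?_, ?_⟩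
    · show stepEdges _ _ = (stepEdges _ _).map _
      rw [ih1]
      exact stepEdges_sim f hf S hinj _ _ _ ih3 ih4 ih2
    · intro v hv
      show stepLabels _ _ (f v) = f (stepLabels _ _ v)
      rw [ih1]
      exact stepLabels_sim f hf S hinj _ _ _ ih3 ih4 ih2 v hv
    · exact stepEdges_mem S _ _ ih3 ih4
    · exact stepLabels_mem S _ _ ih3 ih4

/-- On any path graph with 4 vertices `a - b - c - d` (arbitrary distinct
labels), the label propagation algorithm converges in at most three steps to a star rooted
at the minimum-labeled vertex: after 3 steps every vertex holds the component minimum `C`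
and every remaining edge is incident to `C`. -/
theorem lp_four_path_three_steps
    (a b c d : ℕ) (hab : a ≠ b) (hac : a ≠ c) (had : a ≠ d)
    (hbc : b ≠ c) (hbd : b ≠ d) (hcd : c ≠ d) :
    let E₀ : Finset (ℕ × ℕ) := {(a, b), (b, a), (b, c), (c, b), (c, d), (d, c)}
    let C : ℕ := min (min a b) (min c d)
    (∀ v ∈ ({a, b, c, d} : Finset ℕ), (lpRun E₀ 3).2 v = C) ∧
      ∀ e ∈ (lpRun E₀ 3).1, e.1 = C ∨ e.2 = C := by
  intro E₀ C
  -- the sorted list of the four labels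
  set l := Finset.sort ({a, b, c, d} : Finset ℕ) (· ≤ ·) with hl
  have hcard : ({a, b, c, d} : Finset ℕ).card = 4 := by
    rw [Finset.card_insert_of_notMem (by simp [hab, hac, had]),
      Finset.card_insert_of_notMem (by simp [hbc, hbd]),
      Finset.card_insert_of_notMem (by simp [hcd]), Finset.card_singleton]
  have hlen : l.length = 4 := by rw [hl, Finset.length_sort, hcard]
  set f : ℕ → ℕ := fun n => l.getD (min n 3) 0 with hfdef
  have hget : ∀ n (h : n < l.length), f n = l.get ⟨n, h⟩ := by
    intro n h
    show l.getD (min n 3) 0 = l.get ⟨n, h⟩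
    have hmin : min n 3 = n := by omega
    rw [hmin, List.getD_eq_getElem l 0 h]
    rfl
  have hmono : Monotone f := by
    intro m n hmn
    have hm3 : min m 3 < l.length := by omega
    have hn3 : min n 3 < l.length := by omega
    show l.getD (min m 3) 0 ≤ l.getD (min n 3) 0
    rw [List.getD_eq_getElem l 0 hm3, List.getD_eq_getElem l 0 hn3]
    show l.get ⟨min m 3, hm3⟩ ≤ l.get ⟨min n 3, hn3⟩
    exact (Finset.pairwise_sort _ (· ≤ ·)).rel_get_of_le (by simp only [Fin.mk_le_mk]; omega)
  have hinj4 : ∀ x, x < 4 → ∀ y, y < 4 → f x = f y → x = y := by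
    intro x hx y hy hxy
    have hx' : x < l.length := by omega
    have hy' : y < l.length := by omega
    rw [hget x hx', hget y hy'] at hxy
    have h5 := (Finset.sort_nodup ({a, b, c, d} : Finset ℕ) (· ≤ ·)).get_inj_iff.1 hxy
    exact congrArg Fin.val h5
  -- find indices
  have hmem : ∀ x ∈ ({a, b, c, d} : Finset ℕ), ∃ i, i < 4 ∧ f i = x := by
    intro x hx
    rw [← Finset.mem_sort (· ≤ ·), ← hl, List.mem_iff_get] at hx
    obtain ⟨i, hi⟩ := hx
    exact ⟨i.val, by omega, by rw [hget i.val i.isLt]; simpa using hi⟩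
  obtain ⟨ia, hia, hfa⟩ := hmem a (by simp)
  obtain ⟨ib, hib, hfb⟩ := hmem b (by simp)
  obtain ⟨ic, hic, hfc⟩ := hmem c (by simp)
  obtain ⟨id', hid, hfd⟩ := hmem d (by simp)
  have iab : ia ≠ ib := fun h => hab (by rw [← hfa, ← hfb, h])
  have iac : ia ≠ ic := fun h => hac (by rw [← hfa, ← hfc, h])
  have iad : ia ≠ id' := fun h => had (by rw [← hfa, ← hfd, h])
  have ibc : ib ≠ ic := fun h => hbc (by rw [← hfb, ← hfc, h])
  have ibd : ib ≠ id' := fun h => hbd (by rw [← hfb, ← hfd, h])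
  have icd : ic ≠ id' := fun h => hcd (by rw [← hfc, ← hfd, h])
  set S : Finset ℕ := {ia, ib, ic, id'} with hS
  have hSlt : ∀ x ∈ S, x < 4 := by
    intro x hx
    simp only [hS, Finset.mem_insert, Finset.mem_singleton] at hx
    rcases hx with rfl | rfl | rfl | rfl <;> assumption
  have hinj : Set.InjOn f S := by
    intro x hx y hy hxy
    exact hinj4 x (hSlt x hx) y (hSlt y hy) hxy
  set E₀i : Finset (ℕ × ℕ) := {(ia, ib), (ib, ia), (ib, ic), (ic, ib), (ic, id'), (id', ic)}
    with hE₀i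
  have hE₀mem : ∀ e ∈ E₀i, e.1 ∈ S ∧ e.2 ∈ S := by
    intro e he
    simp only [hE₀i, Finset.mem_insert, Finset.mem_singleton] at he
    rcases he with rfl | rfl | rfl | rfl | rfl | rfl <;> simp [hS]
  have hinjE : Set.InjOn (Prod.map f f) E₀i := by
    intro p hp q hq h
    have hp' := hE₀mem p hp
    have hq' := hE₀mem q hq
    have h1 : f p.1 = f q.1 := congrArg Prod.fst h
    have h2 : f p.2 = f q.2 := congrArg Prod.snd h
    exact Prod.ext (hinj (hp'.1) (hq'.1) h1) (hinj (hp'.2) (hq'.2) h2)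
  have hEimg : E₀ = E₀i.image (Prod.map f f) := by
    simp only [hE₀i, Finset.image_insert, Finset.image_singleton, Prod.map_apply, hfa, hfb,
      hfc, hfd, E₀]
  have base := lp_base' ia ib ic id' hia hib hic hid iab iac iad ibc ibd icd
  have sim := lpRun_sim f hmono S hinj E₀i hinjE hE₀mem 3
  have hC : C = f (min (min ia ib) (min ic id')) := by
    rw [hmono.map_min, hmono.map_min, hmono.map_min, hfa, hfb, hfc, hfd]
  constructor
  · intro v hv
    obtain ⟨iv, hivS, hfv⟩ : ∃ iv, iv ∈ S ∧ f iv = v := by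
      simp only [Finset.mem_insert, Finset.mem_singleton] at hv
      rcases hv with rfl | rfl | rfl | rfl
      · exact ⟨ia, by simp [hS], hfa⟩
      · exact ⟨ib, by simp [hS], hfb⟩
      · exact ⟨ic, by simp [hS], hfc⟩
      · exact ⟨id', by simp [hS], hfd⟩
    rw [hEimg, ← hfv, sim.2.1 iv hivS, base.1 iv (by simpa [hS] using hivS), hC]
  · intro e he
    rw [hEimg, sim.1] at he
    obtain ⟨p, hp, rfl⟩ := Multiset.mem_map.1 he
    rcases base.2 p hp with h | h
    · left; rw [hC]; simp [h]
    · right; rw [hC]; simp [h]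
end

section
/- Given two star graphs, each rooted at its minimum-labeled vertex, connected by a single edge between the two roots, the label propagation algorithm converges to a single star rooted at the overall minimum label in at most three steps. -/
/-- The star rooted at `r` with leaf set `S`, with both orientations of each edge. -/
def starEdges (r : ℕ) (S : Finset ℕ) : Finset (ℕ × ℕ) :=
  (S.image fun s => (r, s)) ∪ (S.image fun s => (s, r))

namespace LPAux

lemma fold_min_le_init (b : ℕ) (s : Multiset ℕ) : s.fold min b ≤ b := by
  induction s using Multiset.induction_on with
  | empty => simp
  | cons a s ih =>
    rw [Multiset.fold_cons_left]
    exact le_trans (min_le_right _ _) ih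

lemma fold_min_le_mem {a b : ℕ} {s : Multiset ℕ} (h : a ∈ s) : s.fold min b ≤ a := by
  induction s using Multiset.induction_on with
  | empty => simp at h
  | cons c s ih =>
    rw [Multiset.fold_cons_left]
    rcases Multiset.mem_cons.1 h with h | h
    · exact le_trans (min_le_left _ _) (le_of_eq h.symm)
    · exact le_trans (min_le_right _ _) (ih h)

lemma le_fold_min {m b : ℕ} {s : Multiset ℕ} (hb : m ≤ b) (hs : ∀ a ∈ s, m ≤ a) :
    m ≤ s.fold min b := by
  induction s using Multiset.induction_on with
  | empty => simpa
  | cons a s ih =>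
    rw [Multiset.fold_cons_left]
    exact le_min (hs a (Multiset.mem_cons_self _ _))
      (ih fun a ha => hs a (Multiset.mem_cons_of_mem ha))

lemma fold_min_mem_of (P : ℕ → Prop) {b : ℕ} {s : Multiset ℕ}
    (hb : P b) (hs : ∀ a ∈ s, P a) : P (s.fold min b) := by
  induction s using Multiset.induction_on with
  | empty => simpa
  | cons a s ih =>
    rw [Multiset.fold_cons_left]
    have h1 : P a := hs a (Multiset.mem_cons_self _ _)
    have h2 : P (s.fold min b) := ih fun a ha => hs a (Multiset.mem_cons_of_mem ha)
    rcases min_choice a (s.fold min b) with h | h <;> rw [h]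
    exacts [h1, h2]

lemma stepLabels_le_init (L : ℕ → ℕ) (E : Multiset (ℕ × ℕ)) (u : ℕ) :
    stepLabels L E u ≤ L u := fold_min_le_init _ _

lemma stepLabels_le_edge (L : ℕ → ℕ) {E : Multiset (ℕ × ℕ)} {v u : ℕ}
    (h : (v, u) ∈ E) (hne : u ≠ L v) : stepLabels L E u ≤ L v := by
  apply fold_min_le_mem
  exact Multiset.mem_map_of_mem _ (Multiset.mem_filter.2 ⟨h, rfl, hne⟩)

lemma le_stepLabels {m : ℕ} (L : ℕ → ℕ) (E : Multiset (ℕ × ℕ)) (u : ℕ)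
    (h1 : m ≤ L u) (h2 : ∀ v, (v, u) ∈ E → m ≤ L v) :
    m ≤ stepLabels L E u := by
  refine le_fold_min h1 ?_
  intro a ha
  obtain ⟨x, hx, rfl⟩ := Multiset.mem_map.1 ha
  obtain ⟨hxE, hx2, -⟩ := Multiset.mem_filter.1 hx
  exact h2 x.1 (by rwa [← hx2])

lemma mem_stepEdges_of_mem (L : ℕ → ℕ) {E : Multiset (ℕ × ℕ)} {x : ℕ × ℕ} (h : x ∈ E) :
    (if x.2 = L x.1 then (x.2, x.1) else (x.2, L x.1)) ∈ stepEdges L E :=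
  Multiset.mem_map_of_mem _ h

lemma inv_step (inV : ℕ → Prop) (m : ℕ) (Lab : ℕ → ℕ) (E : Multiset (ℕ × ℕ))
    (hE : ∀ p ∈ E, inV p.1 ∧ inV p.2)
    (hL : ∀ v, inV v → m ≤ Lab v ∧ inV (Lab v)) :
    (∀ p ∈ stepEdges Lab E, inV p.1 ∧ inV p.2) ∧
      (∀ v, inV v → m ≤ stepLabels Lab E v ∧ inV (stepLabels Lab E v)) := by
  constructor
  · intro p hp
    obtain ⟨x, hx, rfl⟩ := Multiset.mem_map.1 hp
    obtain ⟨h1, h2⟩ := hE x hx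
    split
    · exact ⟨h2, h1⟩
    · exact ⟨h2, (hL _ h1).2⟩
  · intro v hv
    constructor
    · refine le_stepLabels _ _ _ (hL v hv).1 ?_
      intro w hw
      exact (hL w (hE _ hw).1).1
    · refine fold_min_mem_of inV (hL v hv).2 ?_
      intro a ha
      obtain ⟨x, hx, rfl⟩ := Multiset.mem_map.1 ha
      exact (hL x.1 (hE x (Multiset.mem_filter.1 hx).1).1).2

lemma initLabels_le {E₀ : Finset (ℕ × ℕ)} {v b : ℕ} (h : (v, b) ∈ E₀) :
    initLabels E₀ v ≤ b := by
  apply Finset.min'_le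
  apply Finset.mem_insert_of_mem
  exact Finset.mem_image.2 ⟨(v, b), Finset.mem_filter.2 ⟨h, rfl⟩, rfl⟩

lemma initLabels_le_self (E₀ : Finset (ℕ × ℕ)) (v : ℕ) : initLabels E₀ v ≤ v :=
  Finset.min'_le _ _ (Finset.mem_insert_self _ _)

lemma le_initLabels {E₀ : Finset (ℕ × ℕ)} {m v : ℕ} (hv : m ≤ v)
    (hb : ∀ b, (v, b) ∈ E₀ → m ≤ b) : m ≤ initLabels E₀ v := by
  apply Finset.le_min'
  intro y hy
  rcases Finset.mem_insert.1 hy with rfl | hy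
  · exact hv
  · obtain ⟨p, hp, rfl⟩ := Finset.mem_image.1 hy
    obtain ⟨hpE, hp1⟩ := Finset.mem_filter.1 hp
    exact hb p.2 (by rwa [← hp1])

end LPAux

/-- Given two stars, each rooted at its minimum-labeled vertex (`L < R`
being the roots, each smaller than all of its leaves), connected by a single directed edge
between the two roots (in either orientation), the label propagation algorithm converges
in at most three steps to a single star rooted at the overall minimum `L`: after 3 steps
every vertex holds label `L` and every remaining edge is incident to `L`. -/
theorem lp_star_merge_three_steps
    (L R : ℕ) (S T : Finset ℕ) (hLR : L < R)
    (hS : ∀ s ∈ S, L < s) (hT : ∀ t ∈ T, R < t)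
    (hST : Disjoint S T) (hLS : L ∉ S) (hLT : L ∉ T) (hRS : R ∉ S) (hRT : R ∉ T)
    (e : ℕ × ℕ) (he : e = (L, R) ∨ e = (R, L)) :
    let E₀ : Finset (ℕ × ℕ) := starEdges L S ∪ starEdges R T ∪ {e}
    (∀ v ∈ insert L (insert R (S ∪ T)), (lpRun E₀ 3).2 v = L) ∧
      ∀ e' ∈ (lpRun E₀ 3).1, e'.1 = L ∨ e'.2 = L := by
  intro E₀
  have hE : E₀ = starEdges L S ∪ starEdges R T ∪ {e} := rfl
  have hTL : ∀ t ∈ T, L < t := fun t ht => hLR.trans (hT t ht)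
  have hmem : ∀ p : ℕ × ℕ, p ∈ E₀ ↔
      (∃ s ∈ S, (L, s) = p) ∨ (∃ s ∈ S, (s, L) = p) ∨
      (∃ t ∈ T, (R, t) = p) ∨ (∃ t ∈ T, (t, R) = p) ∨ p = e := by
    intro p
    rw [hE]
    simp only [Finset.mem_union, Finset.mem_singleton, starEdges, Finset.mem_image, or_assoc]

  have sneL : ∀ s ∈ S, s ≠ L := fun s hs => (hS s hs).ne'
  have sneR : ∀ s ∈ S, s ≠ R := fun s hs h => hRS (h ▸ hs)
  have tneL : ∀ t ∈ T, t ≠ L := fun t ht => (hTL t ht).ne'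
  have tneR : ∀ t ∈ T, t ≠ R := fun t ht => (hT t ht).ne'
  have sninT : ∀ s ∈ S, s ∉ T := fun s hs => Finset.disjoint_left.1 hST hs
  set Lab0 := initLabels E₀ with hLab0def
  set Em0 := E₀.val with hEm0def
  set E1 := stepEdges Lab0 Em0 with hE1def
  set Lab1 := stepLabels Lab0 Em0 with hLab1def
  set E2 := stepEdges Lab1 E1 with hE2def
  set Lab2 := stepLabels Lab1 E1 with hLab2def
  set E3 := stepEdges Lab2 E2 with hE3def
  set Lab3 := stepLabels Lab2 E2 with hLab3def
  have hrun : lpRun E₀ 3 = (E3, Lab3) := rfl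
  set inV : ℕ → Prop := fun v => v = L ∨ v = R ∨ v ∈ S ∨ v ∈ T with hinV
  have inVL : inV L := by simp [hinV]
  have inVR : inV R := by simp [hinV]
  have inVS : ∀ s ∈ S, inV s := fun s hs => by simp [hinV, hs]
  have inVT : ∀ t ∈ T, inV t := fun t ht => by simp [hinV, ht]
  have edge0 : ∀ p ∈ Em0, inV p.1 ∧ inV p.2 := by
    intro p hp
    rcases (hmem p).1 (Finset.mem_val.mp hp) with ⟨a,ha,h⟩|⟨a,ha,h⟩|⟨a,ha,h⟩|⟨a,ha,h⟩|h
    · rw [← h]; exact ⟨inVL, inVS a ha⟩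
    · rw [← h]; exact ⟨inVS a ha, inVL⟩
    · rw [← h]; exact ⟨inVR, inVT a ha⟩
    · rw [← h]; exact ⟨inVT a ha, inVR⟩
    · rcases he with he' | he' <;> rw [h, he']
      · exact ⟨inVL, inVR⟩
      · exact ⟨inVR, inVL⟩
  have hL0L : Lab0 L = L := by
    refine le_antisymm (LPAux.initLabels_le_self E₀ L) (LPAux.le_initLabels le_rfl ?_)
    intro b hb
    rcases (hmem (L, b)).1 hb with ⟨a,ha,h⟩|⟨a,ha,h⟩|⟨a,ha,h⟩|⟨a,ha,h⟩|h
    · injection h with h1 h2; cases h2; exact (hS _ ha).le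
    · injection h with h1 h2; exact absurd h1 (sneL a ha)
    · injection h with h1 h2; exact absurd h1 hLR.ne'
    · injection h with h1 h2; exact absurd h1 (tneL a ha)
    · rcases he with he' | he' <;> rw [he'] at h <;> injection h with h1 h2
      · cases h2; exact hLR.le
      · exact absurd h1 hLR.ne
  have hL0S : ∀ s ∈ S, Lab0 s = L := by
    intro s hs
    refine le_antisymm (LPAux.initLabels_le ((hmem (s, L)).2 (Or.inr (Or.inl ⟨s, hs, rfl⟩))))
      (LPAux.le_initLabels (hS s hs).le ?_)
    intro b hb
    rcases (hmem (s, b)).1 hb with ⟨a,ha,h⟩|⟨a,ha,h⟩|⟨a,ha,h⟩|⟨a,ha,h⟩|h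
    · injection h with h1 h2; cases h1; exact absurd hs hLS
    · injection h with h1 h2; exact le_of_eq h2
    · injection h with h1 h2; cases h1; exact absurd hs hRS
    · injection h with h1 h2; cases h2; exact hLR.le
    · rcases he with he' | he' <;> rw [he'] at h <;> injection h with h1 h2
      · cases h1; exact absurd hs hLS
      · cases h1; exact absurd hs hRS
  have hL0T : ∀ t ∈ T, Lab0 t = R := by
    intro t ht
    refine le_antisymm (LPAux.initLabels_le ((hmem (t, R)).2
        (Or.inr (Or.inr (Or.inr (Or.inl ⟨t, ht, rfl⟩))))))
      (LPAux.le_initLabels (hT t ht).le ?_)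
    intro b hb
    rcases (hmem (t, b)).1 hb with ⟨a,ha,h⟩|⟨a,ha,h⟩|⟨a,ha,h⟩|⟨a,ha,h⟩|h
    · injection h with h1 h2; cases h1; exact absurd ht hLT
    · injection h with h1 h2; cases h1; exact absurd ht (sninT _ ha)
    · injection h with h1 h2; cases h1; exact absurd ht hRT
    · injection h with h1 h2; cases h2; exact le_rfl
    · rcases he with he' | he' <;> rw [he'] at h <;> injection h with h1 h2
      · cases h1; exact absurd ht hLT
      · cases h1; exact absurd ht hRT

  rcases he with rfl | rfl
  · -- e = (L, R)
    have hL0R : Lab0 R = R := by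
      refine le_antisymm (LPAux.initLabels_le_self E₀ R) (LPAux.le_initLabels le_rfl ?_)
      intro b hb
      rcases (hmem (R, b)).1 hb with ⟨a,ha,h⟩|⟨a,ha,h⟩|⟨a,ha,h⟩|⟨a,ha,h⟩|h
      · injection h with h1 h2; exact absurd h1 hLR.ne
      · injection h with h1 h2; exact absurd h1 (sneR a ha)
      · injection h with h1 h2; cases h2; exact (hT _ ha).le
      · injection h with h1 h2; exact absurd h1 (tneR a ha)
      · injection h with h1 h2; exact absurd h1 hLR.ne'
    have label0 : ∀ v, inV v → L ≤ Lab0 v ∧ inV (Lab0 v) := by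
      intro v hv
      simp only [hinV] at hv
      rcases hv with rfl | rfl | hv | hv
      · rw [hL0L]; exact ⟨le_rfl, inVL⟩
      · rw [hL0R]; exact ⟨hLR.le, inVR⟩
      · rw [hL0S v hv]; exact ⟨le_rfl, inVL⟩
      · rw [hL0T v hv]; exact ⟨hLR.le, inVR⟩
    have inv1 := LPAux.inv_step inV L Lab0 Em0 edge0 label0
    have inv2 := LPAux.inv_step inV L Lab1 E1 inv1.1 inv1.2
    have inv3 := LPAux.inv_step inV L Lab2 E2 inv2.1 inv2.2
    have hL1L : Lab1 L = L := le_antisymm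
      (le_trans (LPAux.stepLabels_le_init _ _ _) hL0L.le) (inv1.2 L inVL).1
    have hLRmem : (L, R) ∈ Em0 := Finset.mem_val.mpr ((hmem (L, R)).2
      (Or.inr (Or.inr (Or.inr (Or.inr rfl)))))
    have hL1R : Lab1 R = L := le_antisymm
      (le_trans (LPAux.stepLabels_le_edge Lab0 hLRmem (by rw [hL0L]; exact hLR.ne')) hL0L.le)
      (inv1.2 R inVR).1
    have hL1S : ∀ s ∈ S, Lab1 s = L := fun s hs => le_antisymm
      (le_trans (LPAux.stepLabels_le_init _ _ _) (hL0S s hs).le) (inv1.2 s (inVS s hs)).1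
    have hTin : ∀ t ∈ T, ∀ a, (a, t) ∈ Em0 → R ≤ Lab0 a := by
      intro t ht a ha
      rcases (hmem (a, t)).1 (Finset.mem_val.mp ha) with ⟨c,hc,h⟩|⟨c,hc,h⟩|⟨c,hc,h⟩|⟨c,hc,h⟩|h
      · injection h with h1 h2; cases h2; exact absurd ht (sninT _ hc)
      · injection h with h1 h2; exact absurd h2.symm (tneL t ht)
      · injection h with h1 h2; cases h1; exact hL0R.ge
      · injection h with h1 h2; exact absurd h2.symm (tneR t ht)
      · injection h with h1 h2; exact absurd h2 (tneR t ht)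
    have hL1T : ∀ t ∈ T, Lab1 t = R := fun t ht => le_antisymm
      (le_trans (LPAux.stepLabels_le_init _ _ _) (hL0T t ht).le)
      (LPAux.le_stepLabels _ _ _ (hL0T t ht).ge (hTin t ht))
    have hL2 : ∀ v, inV v → Lab2 v = L := by
      intro v hv
      refine le_antisymm ?_ (inv2.2 v hv).1
      simp only [hinV] at hv
      rcases hv with rfl | rfl | hv | hv
      · exact le_trans (LPAux.stepLabels_le_init _ _ _) hL1L.le
      · exact le_trans (LPAux.stepLabels_le_init _ _ _) hL1R.le
      · exact le_trans (LPAux.stepLabels_le_init _ _ _) (hL1S v hv).le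
      · have h0 : (v, R) ∈ Em0 := Finset.mem_val.mpr ((hmem (v, R)).2
          (Or.inr (Or.inr (Or.inr (Or.inl ⟨v, hv, rfl⟩)))))
        have h1 : (R, v) ∈ E1 := by
          have h2 := LPAux.mem_stepEdges_of_mem Lab0 h0
          rw [hE1def]
          simpa [hL0T v hv] using h2
        calc Lab2 v ≤ Lab1 R :=
              LPAux.stepLabels_le_edge Lab1 h1 (by rw [hL1R]; exact tneL v hv)
          _ = L := hL1R
    have hL3 : ∀ v, inV v → Lab3 v = L := fun v hv => le_antisymm
      (le_trans (LPAux.stepLabels_le_init _ _ _) (hL2 v hv).le) (inv3.2 v hv).1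
    constructor
    · intro v hv
      rw [hrun]
      refine hL3 v ?_
      simp only [Finset.mem_insert, Finset.mem_union] at hv
      simp only [hinV]
      tauto
    · intro p hp
      rw [hrun] at hp
      rw [hE3def, hE2def, hE1def] at hp
      obtain ⟨x2, hx2, rfl⟩ := Multiset.mem_map.1 hp
      obtain ⟨x1, hx1, rfl⟩ := Multiset.mem_map.1 hx2
      obtain ⟨x0, hx0, rfl⟩ := Multiset.mem_map.1 hx1
      rcases (hmem x0).1 (Finset.mem_val.mp hx0) with ⟨s,hs,h⟩|⟨s,hs,h⟩|⟨t,ht,h⟩|⟨t,ht,h⟩|h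
      · subst h; right
        simp [hL0L, sneL s hs, hL1S s hs, hL2 L inVL]
      · subst h; left
        simp [hL0S s hs, hL1L, sneL s hs, hL2 s (inVS s hs)]
      · subst h; right
        simp [hL0R, tneR t ht, hL1T t ht, hL2 R inVR, tneL t ht]
      · subst h; left
        simp [hL0T t ht, hL1R, tneL t ht, hL2 t (inVT t ht)]
      · subst h; right
        simp [hL0L, hLR.ne', hL1R, hL2 L inVL]
  · -- e = (R, L)
    have hL0R : Lab0 R = L := by
      refine le_antisymm (LPAux.initLabels_le ((hmem (R, L)).2
          (Or.inr (Or.inr (Or.inr (Or.inr rfl)))))) (LPAux.le_initLabels hLR.le ?_)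
      intro b hb
      rcases (hmem (R, b)).1 hb with ⟨a,ha,h⟩|⟨a,ha,h⟩|⟨a,ha,h⟩|⟨a,ha,h⟩|h
      · injection h with h1 h2; exact absurd h1 hLR.ne
      · injection h with h1 h2; exact absurd h1 (sneR a ha)
      · injection h with h1 h2; cases h2; exact (hTL _ ha).le
      · injection h with h1 h2; exact absurd h1 (tneR a ha)
      · injection h with h1 h2; exact h2.ge
    have label0 : ∀ v, inV v → L ≤ Lab0 v ∧ inV (Lab0 v) := by
      intro v hv
      simp only [hinV] at hv
      rcases hv with rfl | rfl | hv | hv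
      · rw [hL0L]; exact ⟨le_rfl, inVL⟩
      · rw [hL0R]; exact ⟨le_rfl, inVL⟩
      · rw [hL0S v hv]; exact ⟨le_rfl, inVL⟩
      · rw [hL0T v hv]; exact ⟨hLR.le, inVR⟩
    have inv1 := LPAux.inv_step inV L Lab0 Em0 edge0 label0
    have inv2 := LPAux.inv_step inV L Lab1 E1 inv1.1 inv1.2
    have inv3 := LPAux.inv_step inV L Lab2 E2 inv2.1 inv2.2
    have hL1L : Lab1 L = L := le_antisymm
      (le_trans (LPAux.stepLabels_le_init _ _ _) hL0L.le) (inv1.2 L inVL).1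
    have hL1R : Lab1 R = L := le_antisymm
      (le_trans (LPAux.stepLabels_le_init _ _ _) hL0R.le) (inv1.2 R inVR).1
    have hL1S : ∀ s ∈ S, Lab1 s = L := fun s hs => le_antisymm
      (le_trans (LPAux.stepLabels_le_init _ _ _) (hL0S s hs).le) (inv1.2 s (inVS s hs)).1
    have hL1T : ∀ t ∈ T, Lab1 t = L := by
      intro t ht
      refine le_antisymm ?_ (inv1.2 t (inVT t ht)).1
      have hRt : (R, t) ∈ Em0 := Finset.mem_val.mpr ((hmem (R, t)).2
        (Or.inr (Or.inr (Or.inl ⟨t, ht, rfl⟩))))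
      exact le_trans (LPAux.stepLabels_le_edge Lab0 hRt
        (by rw [hL0R]; exact tneL t ht)) hL0R.le
    have hL2 : ∀ v, inV v → Lab2 v = L := by
      intro v hv
      refine le_antisymm ?_ (inv2.2 v hv).1
      simp only [hinV] at hv
      rcases hv with rfl | rfl | hv | hv
      · exact le_trans (LPAux.stepLabels_le_init _ _ _) hL1L.le
      · exact le_trans (LPAux.stepLabels_le_init _ _ _) hL1R.le
      · exact le_trans (LPAux.stepLabels_le_init _ _ _) (hL1S v hv).le
      · exact le_trans (LPAux.stepLabels_le_init _ _ _) (hL1T v hv).le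
    have hL3 : ∀ v, inV v → Lab3 v = L := fun v hv => le_antisymm
      (le_trans (LPAux.stepLabels_le_init _ _ _) (hL2 v hv).le) (inv3.2 v hv).1
    constructor
    · intro v hv
      rw [hrun]
      refine hL3 v ?_
      simp only [Finset.mem_insert, Finset.mem_union] at hv
      simp only [hinV]
      tauto
    · intro p hp
      rw [hrun] at hp
      rw [hE3def, hE2def, hE1def] at hp
      obtain ⟨x2, hx2, rfl⟩ := Multiset.mem_map.1 hp
      obtain ⟨x1, hx1, rfl⟩ := Multiset.mem_map.1 hx2
      obtain ⟨x0, hx0, rfl⟩ := Multiset.mem_map.1 hx1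
      rcases (hmem x0).1 (Finset.mem_val.mp hx0) with ⟨s,hs,h⟩|⟨s,hs,h⟩|⟨t,ht,h⟩|⟨t,ht,h⟩|h
      · subst h; right
        simp [hL0L, sneL s hs, hL1S s hs, hL2 L inVL]
      · subst h; left
        simp [hL0S s hs, hL1L, sneL s hs, hL2 s (inVS s hs)]
      · subst h; right
        simp [hL0R, tneL t ht, hL1T t ht, hL2 L inVL]
      · subst h; left
        simp [hL0T t ht, hL1R, tneL t ht, hL2 t (inVT t ht)]
      · subst h; left
        simp [hL0R, hL1L, hLR.ne', hL2 R inVR]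
end
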